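/- Let μ be any finite Borel measure on the path space Fin N × (ℕ → Bool) satisfying μ(Cyl(i,w)) = Φ i w for every edge (i, w). Then the measure of the set Q of rational paths equals twice the total gap, μ(Q) = 2 ( ∑_{i, w} Gap_Φ(i,w) + (1/2) ∑_{i} ( lim_n Φ i (List.replicate n true) + lim_n Φ i (List.replicate n false) ) ), and consequently the measure of the set of irrational paths equals 2·Error(Φ). -/

import Mathlib

noncomputable section
open Filter Topology MeasureTheory

/-- The cylinder of an edge `(i, w)`. -/
def Cyl (N : ℕ) (i : Fin N) (w : List Bool) : Set (Fin N × (ℕ → Bool)) :=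
  {p | p.1 = i ∧ ∀ k : Fin w.length, p.2 k = w.get k}

/-- The set of rational paths: those whose Boolean sequence is eventually constant. -/
def RationalSet (N : ℕ) : Set (Fin N × (ℕ → Bool)) :=
  {p | ∃ (c : Bool) (m : ℕ), ∀ n ≥ m, p.2 n = c}

/-- The gap of the complementary region labelled by the edge `(i, w)`. -/
def GapPhi {N : ℕ} (Φ : Fin N → List Bool → ℝ) (i : Fin N) (w : List Bool) : ℝ :=
  (limUnder atTop (fun n : ℕ => Φ i (w ++ [false] ++ List.replicate n true)) +
   limUnder atTop (fun n : ℕ => Φ i (w ++ [true] ++ List.replicate n false))) / 2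

/-- The total gap `Gap(Φ)`: the sum of `Gap_Φ` over all edge-labelled complementary
regions plus the contribution of the `N` root regions. -/
def TotalGap {N : ℕ} (Φ : Fin N → List Bool → ℝ) : ℝ :=
  (∑' x : Fin N × List Bool, GapPhi Φ x.1 x.2) +
    (1/2) * ∑ i : Fin N,
      (limUnder atTop (fun n : ℕ => Φ i (List.replicate n true)) +
       limUnder atTop (fun n : ℕ => Φ i (List.replicate n false)))

namespace GapAux

/-- extension of a word by a constant tail -/
def ext (w : List Bool) (c : Bool) : ℕ → Bool := fun n => w.getD n c

/-- prefix of a sequence -/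
def pre (s : ℕ → Bool) (n : ℕ) : List Bool := List.ofFn (fun k : Fin n => s k)

lemma length_pre (s : ℕ → Bool) (n : ℕ) : (pre s n).length = n := by simp [pre]

lemma pre_get (s : ℕ → Bool) (n k : ℕ) (h1 : k < (pre s n).length) :
    (pre s n)[k] = s k := by
  simp [pre]

lemma pre_succ (s : ℕ → Bool) (m : ℕ) : pre s (m+1) = pre s m ++ [s m] := by
  unfold pre; rw [List.ofFn_succ']; simp [List.concat_eq_append]

lemma ext_lt (w : List Bool) (c : Bool) (n : ℕ) (h : n < w.length) : ext w c n = w[n] :=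
  List.getD_eq_getElem _ _ h

lemma ext_ge (w : List Bool) (c : Bool) (n : ℕ) (h : w.length ≤ n) : ext w c n = c :=
  List.getD_eq_default _ _ h

lemma ext_at_len (w : List Bool) (b c : Bool) : ext (w ++ [b]) c w.length = b := by
  unfold ext; rw [List.getD_append_right _ _ _ _ le_rfl]; simp

lemma ext_concat_lt (w : List Bool) (b c : Bool) (n : ℕ) (h : n < w.length) :
    ext (w ++ [b]) c n = w[n] := by
  unfold ext; rw [List.getD_append _ _ _ _ h]; exact List.getD_eq_getElem _ _ h

lemma mem_cyl_pre {N : ℕ} {i : Fin N} {s : ℕ → Bool} {n : ℕ} {p : Fin N × (ℕ → Bool)} :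
    p ∈ Cyl N i (pre s n) ↔ p.1 = i ∧ ∀ k < n, p.2 k = s k := by
  constructor
  · rintro ⟨h1, h2⟩
    refine ⟨h1, fun k hk => ?_⟩
    have hk' : k < (pre s n).length := by rwa [length_pre]
    have := h2 ⟨k, hk'⟩
    simpa [pre, List.get_ofFn] using this
  · rintro ⟨h1, h2⟩
    refine ⟨h1, fun k => ?_⟩
    have hk : (k : ℕ) < n := by have := k.2; simpa [pre] using this
    have := h2 k hk
    rw [List.get_eq_getElem, pre_get]; exact this

lemma measurableSet_cyl {N : ℕ} (i : Fin N) (w : List Bool) : MeasurableSet (Cyl N i w) := by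
  have : Cyl N i w =
      (Prod.fst ⁻¹' {i}) ∩ ⋂ k : Fin w.length, {p : Fin N × (ℕ → Bool) | p.2 k = w.get k} := by
    ext p; simp [Cyl, Set.mem_iInter]
  rw [this]
  refine (measurable_fst (measurableSet_singleton i)).inter (MeasurableSet.iInter fun k => ?_)
  have he : {p : Fin N × (ℕ → Bool) | p.2 k = w.get k} =
      (fun p : Fin N × (ℕ → Bool) => p.2 (k : ℕ)) ⁻¹' {w.get k} := rfl
  rw [he]
  exact ((measurable_pi_apply (k : ℕ)).comp measurable_snd) (measurableSet_singleton (w.get k))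

lemma iInter_cyl {N : ℕ} (i : Fin N) (s : ℕ → Bool) :
    ⋂ n, Cyl N i (pre s n) = {(i, s)} := by
  ext p
  simp only [Set.mem_iInter, Set.mem_singleton_iff, mem_cyl_pre]
  constructor
  · intro h
    have h1 := (h 0).1
    have h2 : ∀ k, p.2 k = s k := fun k => (h (k+1)).2 k (Nat.lt_succ_self k)
    exact Prod.ext h1 (funext h2)
  · rintro rfl
    exact fun n => ⟨rfl, fun k _ => rfl⟩

lemma measurableSet_pt {N : ℕ} (i : Fin N) (s : ℕ → Bool) :
    MeasurableSet ({(i, s)} : Set (Fin N × (ℕ → Bool))) := by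
  rw [← iInter_cyl]
  exact MeasurableSet.iInter fun n => measurableSet_cyl i _

section Phi

variable {N : ℕ} (Φ : Fin N → List Bool → ℝ)

/-- the limit along the ray `w ++ c^∞` -/
def Λ (i : Fin N) (w : List Bool) (c : Bool) : ℝ :=
  limUnder atTop (fun n : ℕ => Φ i (w ++ List.replicate n c))

variable (hpos : ∀ (i : Fin N) (w : List Bool), 0 < Φ i w)
  (hharm : ∀ (i : Fin N) (w : List Bool), Φ i w = Φ i (w ++ [false]) + Φ i (w ++ [true]))

include hpos hharm in
lemma anti_ray (i : Fin N) (w : List Bool) (c : Bool) :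
    Antitone (fun n : ℕ => Φ i (w ++ List.replicate n c)) := by
  apply antitone_nat_of_succ_le
  intro n
  have h2 : w ++ List.replicate (n+1) c = (w ++ List.replicate n c) ++ [c] := by
    rw [List.replicate_succ', ← List.append_assoc]
  simp only [h2]
  cases c
  · have := hpos i ((w ++ List.replicate n false) ++ [true])
    linarith [hharm i (w ++ List.replicate n false)]
  · have := hpos i ((w ++ List.replicate n true) ++ [false])
    linarith [hharm i (w ++ List.replicate n true)]

include hpos hharm in
lemma tendsto_ray (i : Fin N) (w : List Bool) (c : Bool) :
    Tendsto (fun n : ℕ => Φ i (w ++ List.replicate n c)) atTop (𝓝 (Λ Φ i w c)) := by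
  have hb : BddBelow (Set.range fun n : ℕ => Φ i (w ++ List.replicate n c)) := by
    refine ⟨0, ?_⟩; rintro x ⟨n, rfl⟩; exact (hpos _ _).le
  have h := tendsto_atTop_ciInf (anti_ray Φ hpos hharm i w c) hb
  have : Λ Φ i w c = ⨅ n : ℕ, Φ i (w ++ List.replicate n c) := h.limUnder_eq
  rw [this]; exact h

include hpos hharm in
lemma lambda_nonneg (i : Fin N) (w : List Bool) (c : Bool) : 0 ≤ Λ Φ i w c :=
  ge_of_tendsto' (tendsto_ray Φ hpos hharm i w c) fun n => (hpos _ _).le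

lemma gapPhi_eq (i : Fin N) (w : List Bool) :
    GapPhi Φ i w = (Λ Φ i (w ++ [false]) true + Λ Φ i (w ++ [true]) false) / 2 := rfl

include hpos hharm in
lemma gapPhi_nonneg (i : Fin N) (w : List Bool) : 0 ≤ GapPhi Φ i w := by
  rw [gapPhi_eq Φ]
  have := lambda_nonneg Φ hpos hharm i (w ++ [false]) true
  have := lambda_nonneg Φ hpos hharm i (w ++ [true]) false
  linarith

lemma lambda_nil (i : Fin N) (c : Bool) :
    Λ Φ i [] c = limUnder atTop (fun n : ℕ => Φ i (List.replicate n c)) := rfl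

include hpos hharm in
lemma measure_pt (μ : Measure (Fin N × (ℕ → Bool))) [IsFiniteMeasure μ]
    (hμ : ∀ (i : Fin N) (w : List Bool), μ (Cyl N i w) = ENNReal.ofReal (Φ i w))
    (i : Fin N) (w : List Bool) (c : Bool) :
    μ {(i, ext w c)} = ENNReal.ofReal (Λ Φ i w c) := by
  have hmono : Antitone (fun n => Cyl N i (pre (ext w c) n)) := by
    intro m n hmn p hp
    rw [mem_cyl_pre] at hp ⊢
    exact ⟨hp.1, fun k hk => hp.2 k (lt_of_lt_of_le hk hmn)⟩
  have h1 : Tendsto (fun n => μ (Cyl N i (pre (ext w c) n))) atTop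
      (𝓝 (μ (⋂ n, Cyl N i (pre (ext w c) n)))) :=
    tendsto_measure_iInter_atTop (fun n => (measurableSet_cyl i _).nullMeasurableSet) hmono
      ⟨0, measure_ne_top μ _⟩
  rw [iInter_cyl] at h1
  have hpre : ∀ n : ℕ, pre (ext w c) (n + w.length) = w ++ List.replicate n c := by
    intro n
    induction n with
    | zero =>
      simp only [Nat.zero_add, List.replicate_zero, List.append_nil]
      refine List.ext_getElem (by rw [length_pre]) fun k h1 h2 => ?_
      simpa [pre] using ext_lt w c k h2
    | succ n ih =>
      have h5 : n + 1 + w.length = (n + w.length) + 1 := by omega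
      rw [h5, pre_succ, ih, ext_ge w c _ (by omega), List.replicate_succ',
        ← List.append_assoc]
  have h3 : Tendsto (fun n : ℕ => ENNReal.ofReal (Φ i (w ++ List.replicate n c))) atTop
      (𝓝 (μ {(i, ext w c)})) := by
    have h2 := h1.comp (tendsto_add_atTop_nat w.length)
    have he : ((fun n => μ (Cyl N i (pre (ext w c) n))) ∘ fun n => n + w.length) =
        fun n : ℕ => ENNReal.ofReal (Φ i (w ++ List.replicate n c)) := by
      funext n
      show μ (Cyl N i (pre (ext w c) (n + w.length))) = _
      rw [hpre n, hμ]
    rwa [he] at h2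
  have h4 : Tendsto (fun n : ℕ => ENNReal.ofReal (Φ i (w ++ List.replicate n c))) atTop
      (𝓝 (ENNReal.ofReal (Λ Φ i w c))) :=
    (ENNReal.continuous_ofReal.tendsto _).comp (tendsto_ray Φ hpos hharm i w c)
  exact tendsto_nhds_unique h3 h4

end Phi

/-- the gap boundary points -/
def gpt {N : ℕ} (x : Fin N × List Bool × Bool) : Fin N × (ℕ → Bool) :=
  (x.1, ext (x.2.1 ++ [x.2.2]) (!x.2.2))

/-- the root points (constant sequences) -/
def rpt {N : ℕ} (y : Fin N × Bool) : Fin N × (ℕ → Bool) :=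
  (y.1, ext [] y.2)

lemma gpt_snd_at_len {N : ℕ} (x : Fin N × List Bool × Bool) :
    (gpt x).2 x.2.1.length = x.2.2 := ext_at_len _ _ _

lemma gpt_snd_gt {N : ℕ} (x : Fin N × List Bool × Bool) (n : ℕ) (h : x.2.1.length < n) :
    (gpt x).2 n = !x.2.2 := ext_ge _ _ _ (by simp; omega)

lemma rpt_snd {N : ℕ} (y : Fin N × Bool) (n : ℕ) : (rpt y).2 n = y.2 := ext_ge [] y.2 n (Nat.zero_le n)

lemma gpt_inj {N : ℕ} : Function.Injective (gpt (N := N)) := by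
  have key : ∀ (w w' : List Bool) (b b' : Bool),
      ext (w ++ [b]) (!b) = ext (w' ++ [b']) (!b') → ¬ (w.length < w'.length) := by
    intro w w' b b' he hlt
    have hb : b = b' := by
      have h1 := congrFun he (w'.length + 1)
      rw [ext_ge _ _ _ (by simp; omega), ext_ge _ _ _ (by simp)] at h1
      simpa using h1
    have h2 := congrFun he w'.length
    rw [ext_ge _ _ _ (by simp; omega), ext_at_len] at h2
    rw [hb] at h2
    exact (Bool.not_ne_self b') h2
  rintro ⟨i, w, b⟩ ⟨i', w', b'⟩ h
  obtain ⟨h1, h2⟩ := Prod.ext_iff.mp h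
  simp only [gpt] at h1 h2
  have hlen : w.length = w'.length := by
    rcases lt_trichotomy w.length w'.length with hl | hl | hl
    · exact absurd hl (key _ _ _ _ h2)
    · exact hl
    · exact absurd hl (key _ _ _ _ h2.symm)
  have hb : b = b' := by
    have := congrFun h2 w.length
    rw [ext_at_len, hlen, ext_at_len] at this
    exact this
  have hw : w = w' := by
    refine List.ext_getElem hlen fun k hk hk' => ?_
    have := congrFun h2 k
    rwa [ext_concat_lt _ _ _ _ hk, ext_concat_lt _ _ _ _ hk'] at this
  subst h1; subst hb; subst hw; rfl

lemma rpt_inj {N : ℕ} : Function.Injective (rpt (N := N)) := by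
  rintro ⟨i, c⟩ ⟨i', c'⟩ h
  obtain ⟨h1, h2⟩ := Prod.ext_iff.mp h
  simp only [rpt] at h1 h2
  have h3 := congrFun h2 0
  rw [ext_ge [] c 0 (Nat.zero_le 0), ext_ge [] c' 0 (Nat.zero_le 0)] at h3
  subst h1; subst h3; rfl

lemma gpt_ne_rpt {N : ℕ} (x : Fin N × List Bool × Bool) (y : Fin N × Bool) : gpt x ≠ rpt y := by
  intro h
  have h2 := congrArg Prod.snd h
  have ha := congrFun h2 x.2.1.length
  have hb := congrFun h2 (x.2.1.length + 1)
  rw [gpt_snd_at_len, rpt_snd] at ha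
  rw [gpt_snd_gt x _ (by omega), rpt_snd] at hb
  rw [← ha] at hb
  exact Bool.not_ne_self x.2.2 hb

lemma rationalSet_eq (N : ℕ) :
    RationalSet N = (⋃ x, {gpt x}) ∪ (⋃ y : Fin N × Bool, {rpt y}) := by
  ext ⟨j, s⟩
  simp only [Set.mem_union, Set.mem_iUnion, Set.mem_singleton_iff]
  constructor
  · rintro ⟨c, m, hm⟩
    have key : ∀ (m : ℕ) (c : Bool), (∀ n ≥ m, s n = c) →
        (∃ x, (j, s) = gpt x) ∨ ∃ y : Fin N × Bool, (j, s) = rpt y := by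
      intro m
      induction m with
      | zero =>
        intro c hm
        right
        refine ⟨(j, c), Prod.ext rfl (funext fun n => ?_)⟩
        rw [show (rpt ((j, c) : Fin N × Bool)).2 n = c from rpt_snd _ n]
        exact hm n (Nat.zero_le n)
      | succ k ih =>
        intro c hm
        by_cases hc : s k = c
        · refine ih c fun n hn => ?_
          rcases Nat.eq_or_lt_of_le hn with h | h
          · rw [← h]; exact hc
          · exact hm n h
        · left
          have hsk : (!(s k)) = c := by cases hck : s k <;> cases c <;> simp_all
          refine ⟨(j, pre s k, s k), Prod.ext rfl (funext fun n => ?_)⟩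
        -- goal : s n = (gpt (j, pre s k, s k)).2 n
          show s n = ext (pre s k ++ [s k]) (!(s k)) n
          rcases lt_trichotomy n k with h | h | h
          · rw [ext_concat_lt _ _ _ _ (by rw [length_pre]; exact h),
              pre_get s k n (by rw [length_pre]; exact h)]
          · subst h
            have h0 := ext_at_len (pre s n) (s n) (!(s n))
            rw [length_pre] at h0
            rw [h0]
          · rw [ext_ge _ _ _ (by simp only [List.length_append, length_pre,
              List.length_singleton]; omega), hsk]
            exact hm n (by omega)
    exact key m c hm
  · intro h
    rcases h with ⟨x, hx⟩ | ⟨y, hy⟩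
    · refine ⟨!x.2.2, x.2.1.length + 1, fun n hn => ?_⟩
      rw [show s = (gpt x).2 from congrArg Prod.snd hx]
      exact gpt_snd_gt x n (by omega)
    · refine ⟨y.2, 0, fun n _ => ?_⟩
      rw [show s = (rpt y).2 from congrArg Prod.snd hy]
      exact rpt_snd y n

end GapAux

open GapAux

/-- **Measure of rational and irrational paths.** If `μ` is a finite Borel measure on
the path space with `μ (Cyl (i,w)) = Φ i w` for every edge `(i,w)`, then the set `Q` of
rational paths has measure `2 · Gap(Φ)` and the set of irrational paths has measure
`2 · Error(Φ)` where `Error(Φ) = ∂Φ/2 − Gap(Φ)`. -/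
theorem measure_rational_irrational (N : ℕ) (hN : 1 ≤ N)
    (Φ : Fin N → List Bool → ℝ)
    (hpos : ∀ (i : Fin N) (w : List Bool), 0 < Φ i w)
    (hharm : ∀ (i : Fin N) (w : List Bool), Φ i w = Φ i (w ++ [false]) + Φ i (w ++ [true]))
    (μ : Measure (Fin N × (ℕ → Bool))) [IsFiniteMeasure μ]
    (hμ : ∀ (i : Fin N) (w : List Bool), μ (Cyl N i w) = ENNReal.ofReal (Φ i w)) :
    μ (RationalSet N) = ENNReal.ofReal (2 * TotalGap Φ) ∧
    μ (RationalSet N)ᶜ =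
      ENNReal.ofReal (2 * ((∑ i : Fin N, Φ i []) / 2 - TotalGap Φ)) := by
  classical
  have hGpt : ∀ x : Fin N × List Bool × Bool,
      μ {gpt x} = ENNReal.ofReal (Λ Φ x.1 (x.2.1 ++ [x.2.2]) (!x.2.2)) := fun x =>
    measure_pt Φ hpos hharm μ hμ x.1 (x.2.1 ++ [x.2.2]) (!x.2.2)
  have hRpt : ∀ y : Fin N × Bool, μ {rpt y} = ENNReal.ofReal (Λ Φ y.1 [] y.2) := fun y =>
    measure_pt Φ hpos hharm μ hμ y.1 [] y.2
  have hmG : MeasurableSet (⋃ x, ({gpt x} : Set (Fin N × (ℕ → Bool)))) :=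
    MeasurableSet.iUnion fun x => measurableSet_pt x.1 _
  have hmR : MeasurableSet (⋃ y : Fin N × Bool, ({rpt y} : Set (Fin N × (ℕ → Bool)))) :=
    MeasurableSet.iUnion fun y => measurableSet_pt y.1 _
  have hQ : RationalSet N = (⋃ x, {gpt x}) ∪ (⋃ y : Fin N × Bool, {rpt y}) := rationalSet_eq N
  have hdisjGR : Disjoint (⋃ x, ({gpt x} : Set (Fin N × (ℕ → Bool))))
      (⋃ y : Fin N × Bool, ({rpt y} : Set (Fin N × (ℕ → Bool)))) := by
    rw [Set.disjoint_iUnion_left]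
    intro x
    rw [Set.disjoint_iUnion_right]
    intro y
    exact Set.disjoint_singleton.mpr (gpt_ne_rpt x y)
  have hμG : μ (⋃ x, ({gpt x} : Set (Fin N × (ℕ → Bool)))) = ∑' x, μ {gpt x} := by
    refine measure_iUnion ?_ fun x => measurableSet_pt x.1 _
    intro a b hab
    simp only [Function.onFun, Set.disjoint_singleton]
    exact fun h => hab (gpt_inj h)
  have hμR : μ (⋃ y : Fin N × Bool, ({rpt y} : Set (Fin N × (ℕ → Bool)))) = ∑' y, μ {rpt y} := by
    refine measure_iUnion ?_ fun y => measurableSet_pt y.1 _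
    intro a b hab
    simp only [Function.onFun, Set.disjoint_singleton]
    exact fun h => hab (rpt_inj h)
  -- evaluate the gap part
  have hA1 : (∑' x : Fin N × List Bool × Bool,
        ENNReal.ofReal (Λ Φ x.1 (x.2.1 ++ [x.2.2]) (!x.2.2)))
      = ∑' q : Fin N × List Bool, ENNReal.ofReal (2 * GapPhi Φ q.1 q.2) := by
    rw [← (Equiv.prodAssoc (Fin N) (List Bool) Bool).tsum_eq
        (fun x : Fin N × List Bool × Bool => ENNReal.ofReal (Λ Φ x.1 (x.2.1 ++ [x.2.2]) (!x.2.2)))]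
    rw [ENNReal.tsum_prod']
    refine tsum_congr fun q => ?_
    have : (∑' b : Bool, ENNReal.ofReal (Λ Φ q.1 (q.2 ++ [b]) (!b)))
        = ENNReal.ofReal (Λ Φ q.1 (q.2 ++ [true]) false) +
          ENNReal.ofReal (Λ Φ q.1 (q.2 ++ [false]) true) := by
      rw [tsum_fintype, Fintype.sum_bool]
      norm_num
    rw [show (∑' b : Bool, ENNReal.ofReal
        (Λ Φ ((Equiv.prodAssoc (Fin N) (List Bool) Bool) (q, b)).1
          ((((Equiv.prodAssoc (Fin N) (List Bool) Bool) (q, b)).2.1) ++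
            [((Equiv.prodAssoc (Fin N) (List Bool) Bool) (q, b)).2.2])
          (!((Equiv.prodAssoc (Fin N) (List Bool) Bool) (q, b)).2.2)))
        = ∑' b : Bool, ENNReal.ofReal (Λ Φ q.1 (q.2 ++ [b]) (!b)) from rfl]
    rw [this, ← ENNReal.ofReal_add (lambda_nonneg Φ hpos hharm _ _ _)
      (lambda_nonneg Φ hpos hharm _ _ _)]
    congr 1
    rw [gapPhi_eq Φ]
    ring
  have hμG' : μ (⋃ x, ({gpt x} : Set (Fin N × (ℕ → Bool))))
      = ∑' q : Fin N × List Bool, ENNReal.ofReal (2 * GapPhi Φ q.1 q.2) := by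
    rw [hμG]
    simp_rw [hGpt]
    exact hA1
  have hAne : (∑' q : Fin N × List Bool, ENNReal.ofReal (2 * GapPhi Φ q.1 q.2)) ≠ ⊤ := by
    rw [← hμG']; exact measure_ne_top μ _
  have h2g : ∀ q : Fin N × List Bool, 0 ≤ 2 * GapPhi Φ q.1 q.2 := fun q => by
    have := gapPhi_nonneg Φ hpos hharm q.1 q.2; linarith
  have hsum : Summable (fun q : Fin N × List Bool => 2 * GapPhi Φ q.1 q.2) := by
    have h := ENNReal.summable_toReal hAne
    exact h.congr fun q => ENNReal.toReal_ofReal (h2g q)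
  have hAval : (∑' q : Fin N × List Bool, ENNReal.ofReal (2 * GapPhi Φ q.1 q.2))
      = ENNReal.ofReal (2 * ∑' q : Fin N × List Bool, GapPhi Φ q.1 q.2) := by
    rw [← tsum_mul_left, ENNReal.ofReal_tsum_of_nonneg h2g hsum]
  -- evaluate the root part
  have hμR' : μ (⋃ y : Fin N × Bool, ({rpt y} : Set (Fin N × (ℕ → Bool))))
      = ENNReal.ofReal (∑ i : Fin N, (Λ Φ i [] true + Λ Φ i [] false)) := by
    rw [hμR]
    simp_rw [hRpt]
    rw [tsum_fintype, Fintype.sum_prod_type,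
      ENNReal.ofReal_sum_of_nonneg (fun i _ =>
        add_nonneg (lambda_nonneg Φ hpos hharm i [] true) (lambda_nonneg Φ hpos hharm i [] false))]
    refine Finset.sum_congr rfl fun i _ => ?_
    rw [Fintype.sum_bool, ← ENNReal.ofReal_add (lambda_nonneg Φ hpos hharm i [] true)
      (lambda_nonneg Φ hpos hharm i [] false)]
  -- identify with TotalGap
  have hTG : 2 * TotalGap Φ = 2 * (∑' q : Fin N × List Bool, GapPhi Φ q.1 q.2)
      + ∑ i : Fin N, (Λ Φ i [] true + Λ Φ i [] false) := by
    unfold TotalGap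
    simp only [← lambda_nil]
    ring
  have hsum_nonneg : 0 ≤ ∑' q : Fin N × List Bool, GapPhi Φ q.1 q.2 :=
    tsum_nonneg fun q => gapPhi_nonneg Φ hpos hharm q.1 q.2
  have hroot_nonneg : 0 ≤ ∑ i : Fin N, (Λ Φ i [] true + Λ Φ i [] false) :=
    Finset.sum_nonneg fun i _ =>
      add_nonneg (lambda_nonneg Φ hpos hharm i [] true) (lambda_nonneg Φ hpos hharm i [] false)
  have hQmeas : μ (RationalSet N) = ENNReal.ofReal (2 * TotalGap Φ) := by
    rw [hQ, measure_union hdisjGR hmR, hμG', hAval, hμR',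
      ← ENNReal.ofReal_add (by linarith) hroot_nonneg, hTG]
  refine ⟨hQmeas, ?_⟩
  have huniv : μ Set.univ = ENNReal.ofReal (∑ i : Fin N, Φ i []) := by
    have hu : (Set.univ : Set (Fin N × (ℕ → Bool))) = ⋃ i : Fin N, Cyl N i [] := by
      ext p
      simp only [Set.mem_univ, true_iff, Set.mem_iUnion]
      exact ⟨p.1, rfl, fun k => k.elim0⟩
    have hpd : Pairwise (Function.onFun Disjoint fun i : Fin N => Cyl N i []) := by
      intro a b hab
      simp only [Function.onFun]
      rw [Set.disjoint_left]
      rintro p ⟨hpa, -⟩ ⟨hpb, -⟩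
      exact hab (hpa.symm.trans hpb)
    rw [hu, measure_iUnion hpd (fun i => measurableSet_cyl i []), tsum_fintype,
      ENNReal.ofReal_sum_of_nonneg (fun i _ => (hpos i []).le)]
    exact Finset.sum_congr rfl fun i _ => hμ i []
  have hmQ : MeasurableSet (RationalSet N) := by
    rw [hQ]; exact hmG.union hmR
  have h2TG : 0 ≤ 2 * TotalGap Φ := by rw [hTG]; linarith
  rw [measure_compl hmQ (measure_ne_top μ _), huniv, hQmeas,
    show (2 * ((∑ i : Fin N, Φ i []) / 2 - TotalGap Φ))
      = (∑ i : Fin N, Φ i []) - 2 * TotalGap Φ by ring,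
    ENNReal.ofReal_sub _ h2TG]
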